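/- Let G be a continuum in which every point except countably many has a neighborhood homeomorphic to a finite graph. Then G is the union of countably many free arcs and a countable set of points. -/

import Mathlib

open unitInterval

def IsArcFrom {G : Type*} [TopologicalSpace G] (α : Set G) (x y : G) : Prop :=
  ∃ e : I → G, Continuous e ∧ Function.Injective e ∧ e 0 = x ∧ e 1 = y ∧ Set.range e = α

/-- `N` is a finite graph (as a subset): a finite union of arcs any two of which
meet only in endpoints. -/
def IsFiniteGraphSet {G : Type*} [TopologicalSpace G] (N : Set G) : Prop :=
  ∃ (k : ℕ) (a : Fin k → Set G) (p q : Fin k → G),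
    (∀ i, IsArcFrom (a i) (p i) (q i)) ∧ N = ⋃ i, a i ∧
    ∀ i j, i ≠ j → a i ∩ a j ⊆ ({p i, q i} : Set G) ∩ {p j, q j}

/-- A free arc: an arc whose interior (arc minus endpoints) is open in `G`. -/
def IsFreeArc {G : Type*} [TopologicalSpace G] (α : Set G) : Prop :=
  ∃ x y : G, IsArcFrom α x y ∧ IsOpen (α \ {x, y})

/-- If in a continuum `G` every point outside a countable set has a neighborhood
that is a finite graph, then `G` is the union of countably many free arcs and a
countable set of points. -/
def Good {G : Type*} [TopologicalSpace G] (x : G) : Prop :=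
  ∃ (α : Set G) (u v : G), IsArcFrom α u v ∧ IsOpen (α \ {u, v}) ∧ x ∈ α \ {u, v}

lemma subarc_good {G : Type*} [MetricSpace G] (e : I → G) (he : Continuous e)
    (hinj : Function.Injective e) (U : Set G) (hU : IsOpen U)
    (hUsub : U ⊆ Set.range e) (hU0 : e 0 ∉ U) (hU1 : e 1 ∉ U)
    {y : G} (hy : y ∈ U) : Good y := by
  obtain ⟨t, rfl⟩ := hUsub hy
  -- the preimage of U is open in I and comes from an open set of ℝ
  have hpre : IsOpen (e ⁻¹' U) := hU.preimage he
  obtain ⟨V', hV', hV'eq⟩ := isOpen_induced_iff.mp hpre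
  have ht0 : (0:ℝ) < (t:ℝ) := by
    rcases eq_or_lt_of_le t.2.1 with h | h
    · exact absurd hy (by rw [show t = 0 from Subtype.ext h.symm]; exact hU0)
    · exact h
  have ht1 : (t:ℝ) < 1 := by
    rcases eq_or_lt_of_le t.2.2 with h | h
    · exact absurd hy (by rw [show t = 1 from Subtype.ext h]; exact hU1)
    · exact h
  have htV : (t:ℝ) ∈ V' ∩ Set.Ioo 0 1 := by
    constructor
    · have : t ∈ Subtype.val ⁻¹' V' := hV'eq ▸ hy
      exact this
    · exact ⟨ht0, ht1⟩
  obtain ⟨ε, hε, hball⟩ := Metric.isOpen_iff.mp (hV'.inter isOpen_Ioo) _ htV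
  set a : ℝ := (t:ℝ) - ε/2 with ha_def
  set b : ℝ := (t:ℝ) + ε/2 with hb_def
  have hab : a < b := by simp [ha_def, hb_def]; linarith
  have hIcc : ∀ u : ℝ, u ∈ Set.Icc a b → u ∈ V' ∩ Set.Ioo 0 1 := by
    intro u hu
    apply hball
    rw [Metric.mem_ball, Real.dist_eq, abs_sub_lt_iff]
    constructor <;> [skip; skip] <;> simp [ha_def, hb_def] at hu ⊢ <;> linarith [hu.1, hu.2]
  have haI : a ∈ Set.Icc (0:ℝ) 1 := Set.Ioo_subset_Icc_self (hIcc a ⟨le_refl a, le_of_lt hab⟩).2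
  have hbI : b ∈ Set.Icc (0:ℝ) 1 := Set.Ioo_subset_Icc_self (hIcc b ⟨le_of_lt hab, le_refl b⟩).2
  -- reparametrization
  set sg : I → I := fun s => Set.projIcc (0:ℝ) 1 zero_le_one (a + (s:ℝ) * (b - a)) with hsg
  have hmemab : ∀ s : I, a + (s:ℝ) * (b - a) ∈ Set.Icc a b := by
    intro s
    constructor
    · nlinarith [s.2.1, s.2.2, hab]
    · nlinarith [s.2.1, s.2.2, hab]
  have hmem01 : ∀ s : I, a + (s:ℝ) * (b - a) ∈ Set.Icc (0:ℝ) 1 := fun s =>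
    ⟨le_trans haI.1 (hmemab s).1, le_trans (hmemab s).2 hbI.2⟩
  have hsgcoe : ∀ s : I, ((sg s : I) : ℝ) = a + (s:ℝ) * (b - a) := by
    intro s
    simp only [hsg]
    rw [Set.projIcc_of_mem _ (hmem01 s)]
  have hsgcont : Continuous sg := by
    apply continuous_projIcc.comp
    fun_prop
  have hsginj : Function.Injective sg := by
    intro s s' h
    have := congrArg (Subtype.val) h
    rw [hsgcoe, hsgcoe] at this
    have : (s:ℝ) = s' := by
      have hba : (0:ℝ) < b - a := by linarith
      field_simp at this
      exact mul_right_cancel₀ hba.ne' (by linarith)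
    exact Subtype.ext this
  set f : I → G := e ∘ sg with hf
  set α : Set G := Set.range f with hα
  have hrsg : Set.range sg = Subtype.val ⁻¹' Set.Icc a b := by
    ext u
    constructor
    · rintro ⟨s, rfl⟩
      show ((sg s : I) : ℝ) ∈ Set.Icc a b
      rw [hsgcoe]
      exact hmemab s
    · intro hu
      have hba : (0:ℝ) < b - a := by linarith
      refine ⟨⟨((u:ℝ) - a) / (b - a), ?_, ?_⟩, ?_⟩
      · exact div_nonneg (by linarith [hu.1]) hba.le
      · rw [div_le_one hba]; linarith [hu.2]
      · apply Subtype.ext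
        rw [hsgcoe]
        simp only []
        field_simp
        ring
  -- the arc and its endpoints
  have hfa : f 0 = e ⟨a, haI⟩ := by
    simp only [hf, Function.comp_apply]
    congr 1
    apply Subtype.ext
    rw [hsgcoe]
    norm_num
  have hfb : f 1 = e ⟨b, hbI⟩ := by
    simp only [hf, Function.comp_apply]
    congr 1
    apply Subtype.ext
    rw [hsgcoe]
    norm_num
  have hfinj : Function.Injective f := hinj.comp hsginj
  have hfcont : Continuous f := he.comp hsgcont
  have harc : IsArcFrom α (e ⟨a, haI⟩) (e ⟨b, hbI⟩) :=
    ⟨f, hfcont, hfinj, hfa, hfb, rfl⟩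
  -- the open middle part
  set J : Set I := Subtype.val ⁻¹' Set.Ioo a b with hJ
  have hJopen : IsOpen J := isOpen_induced_iff.mpr ⟨Set.Ioo a b, isOpen_Ioo, rfl⟩
  have hJU : ∀ u : I, u ∈ J → e u ∈ U := by
    intro u hu
    have : (u:ℝ) ∈ V' := (hIcc u (Set.Ioo_subset_Icc_self hu)).1
    have : u ∈ Subtype.val ⁻¹' V' := this
    rw [hV'eq] at this
    exact this
  have hST : (Subtype.val ⁻¹' Set.Icc a b : Set I) \ {⟨a, haI⟩, ⟨b, hbI⟩} = J := by
    ext u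
    simp only [Set.mem_diff, Set.mem_preimage, Set.mem_Icc, Set.mem_Ioo,
      Set.mem_insert_iff, Set.mem_singleton_iff, hJ]
    constructor
    · rintro ⟨⟨h1, h2⟩, h3⟩
      push_neg at h3
      constructor
      · rcases lt_or_eq_of_le h1 with h | h
        · exact h
        · exact absurd (Subtype.ext h.symm) h3.1
      · rcases lt_or_eq_of_le h2 with h | h
        · exact h
        · exact absurd (Subtype.ext h) h3.2
    · rintro ⟨h1, h2⟩
      refine ⟨⟨h1.le, h2.le⟩, ?_⟩
      push_neg
      constructor
      · intro h; rw [h] at h1; exact lt_irrefl _ h1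
      · intro h; rw [h] at h2; exact lt_irrefl _ h2
  have hdiff : α \ {e ⟨a, haI⟩, e ⟨b, hbI⟩} = e '' J := by
    have hαim : α = e '' (Subtype.val ⁻¹' Set.Icc a b) := by
      rw [hα, hf, Set.range_comp, hrsg]
    have hpair : ({e ⟨a, haI⟩, e ⟨b, hbI⟩} : Set G) = e '' {⟨a, haI⟩, ⟨b, hbI⟩} := by
      simp [Set.image_insert_eq]
    rw [hαim, hpair, ← Set.image_diff hinj, hST]
  -- e '' J is open in G
  have hemb : Topology.IsInducing e := (he.isClosedEmbedding hinj).toIsInducing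
  obtain ⟨V, hVopen, hVeq⟩ := hemb.isOpen_iff.mp hJopen
  have himJ : e '' J = U ∩ V := by
    apply Set.Subset.antisymm
    · rintro z ⟨u, hu, rfl⟩
      refine ⟨hJU u hu, ?_⟩
      have : u ∈ e ⁻¹' V := by rw [hVeq]; exact hu
      exact this
    · rintro z ⟨hzU, hzV⟩
      obtain ⟨u, rfl⟩ := hUsub hzU
      refine ⟨u, ?_, rfl⟩
      rw [← hVeq]
      exact hzV
  have hopen : IsOpen (α \ {e ⟨a, haI⟩, e ⟨b, hbI⟩}) := by
    rw [hdiff, himJ]; exact hU.inter hVopen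
  refine ⟨α, _, _, harc, hopen, ?_⟩
  rw [hdiff]
  refine ⟨t, ?_, rfl⟩
  simp only [hJ, Set.mem_preimage, Set.mem_Ioo, ha_def, hb_def]
  constructor <;> linarith

lemma graph_good {G : Type*} [MetricSpace G] (N : Set G) (hN : IsFiniteGraphSet N) :
    ∃ F : Set G, F.Finite ∧ ∀ y ∈ interior N, y ∉ F → Good y := by
  obtain ⟨k, a, p, q, harc, hNeq, hmeet⟩ := hN
  refine ⟨Set.range p ∪ Set.range q, (Set.finite_range p).union (Set.finite_range q), ?_⟩
  intro y hyN hyF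
  have hyN' : y ∈ N := interior_subset hyN
  rw [hNeq] at hyN'
  obtain ⟨i, hyi⟩ := Set.mem_iUnion.mp hyN'
  have hclosed : ∀ j, IsClosed (a j) := by
    intro j
    obtain ⟨e, he, hinj, -, -, hre⟩ := harc j
    rw [← hre]
    exact (isCompact_range he).isClosed
  have hnotpq : ∀ j, y ∉ ({p j, q j} : Set G) := by
    intro j h
    rcases h with h | h
    · exact hyF (Or.inl ⟨j, h.symm⟩)
    · exact hyF (Or.inr ⟨j, (Set.mem_singleton_iff.mp h).symm⟩)
  set U : Set G := (interior N ∩ ⋂ j, ⋂ _ : j ≠ i, (a j)ᶜ) ∩ ({p i, q i} : Set G)ᶜ with hU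
  have hUopen : IsOpen U := by
    refine IsOpen.inter (IsOpen.inter isOpen_interior ?_) ?_
    · exact isOpen_iInter_of_finite fun j =>
        isOpen_iInter_of_finite fun _ => (hclosed j).isOpen_compl
    · exact (Set.Finite.isClosed (Set.toFinite _)).isOpen_compl
  have hyU : y ∈ U := by
    refine ⟨⟨hyN, ?_⟩, hnotpq i⟩
    rw [Set.mem_iInter₂]
    intro j hj hyj
    exact hnotpq i (hmeet i j (Ne.symm hj) ⟨hyi, hyj⟩).1
  have hUsub : U ⊆ a i := by
    rintro z ⟨⟨hz1, hz2⟩, hz3⟩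
    have : z ∈ N := interior_subset hz1
    rw [hNeq] at this
    obtain ⟨j, hzj⟩ := Set.mem_iUnion.mp this
    by_cases h : j = i
    · exact h ▸ hzj
    · exact absurd hzj (Set.mem_iInter₂.mp hz2 j h)
  obtain ⟨e, he, hinj, he0, he1, hre⟩ := harc i
  refine subarc_good e he hinj U hUopen ?_ ?_ ?_ hyU
  · rw [hre]; exact hUsub
  · rw [he0]; exact fun h => h.2 (Set.mem_insert _ _)
  · rw [he1]; exact fun h => h.2 (Set.mem_insert_of_mem _ rfl)

theorem stmt19 {G : Type*} [MetricSpace G] [CompactSpace G] [ConnectedSpace G]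
    [Nonempty G]
    (E : Set G) (hE : E.Countable)
    (hloc : ∀ x : G, x ∉ E → ∃ N ∈ nhds x, IsFiniteGraphSet N) :
    ∃ (𝒜 : Set (Set G)) (C : Set G), 𝒜.Countable ∧ C.Countable ∧
      (∀ α ∈ 𝒜, IsFreeArc α) ∧ (Set.univ : Set G) = ⋃₀ 𝒜 ∪ C := by
  classical
  -- countable family of free arcs covering all good points
  let ι := {d : Set G × G × G // IsArcFrom d.1 d.2.1 d.2.2 ∧ IsOpen (d.1 \ {d.2.1, d.2.2})}
  let s : ι → Set G := fun d => d.1.1 \ {d.1.2.1, d.1.2.2}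
  obtain ⟨T, hTc, hTeq⟩ :=
    TopologicalSpace.isOpen_iUnion_countable s (fun d => d.2.2)
  set C : Set G := {x | ¬ Good x} with hC
  -- C \ E is countable
  have hCE : (C ∩ Eᶜ).Countable := by
    set D : Set G := C ∩ Eᶜ with hD
    have hch : ∀ x : D, ∃ (V : Set G) (F : Set G), IsOpen V ∧ (x : G) ∈ V ∧ F.Finite ∧
        C ∩ V ⊆ F := by
      rintro ⟨x, hxC, hxE⟩
      obtain ⟨N, hN, hNg⟩ := hloc x hxE
      obtain ⟨F, hF, hFgood⟩ := graph_good N hNg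
      refine ⟨interior N, F, isOpen_interior, mem_interior_iff_mem_nhds.mpr hN, hF, ?_⟩
      rintro z ⟨hzC, hzN⟩
      by_contra hzF
      exact hzC (hFgood z hzN hzF)
    choose V F hVopen hxV hFfin hCVF using hch
    obtain ⟨T', hT'c, hT'eq⟩ := TopologicalSpace.isOpen_iUnion_countable V hVopen
    have hDsub : D ⊆ ⋃ x ∈ T', F x := by
      intro z hz
      have : z ∈ ⋃ x, V x := Set.mem_iUnion.mpr ⟨⟨z, hz⟩, hxV ⟨z, hz⟩⟩
      rw [← hT'eq] at this
      obtain ⟨x, hxT', hzV⟩ := Set.mem_iUnion₂.mp this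
      exact Set.mem_iUnion₂.mpr ⟨x, hxT', hCVF x ⟨hz.1, hzV⟩⟩
    exact Set.Countable.mono hDsub (Set.Countable.biUnion hT'c fun x _ => (hFfin x).countable)
  refine ⟨(fun d : ι => d.1.1) '' T, C, hTc.image _, ?_, ?_, ?_⟩
  · have : C ⊆ E ∪ (C ∩ Eᶜ) := by
      intro x hx
      by_cases h : x ∈ E
      · exact Or.inl h
      · exact Or.inr ⟨hx, h⟩
    exact Set.Countable.mono this (hE.union hCE)
  · rintro α ⟨d, hd, rfl⟩
    exact ⟨d.1.2.1, d.1.2.2, d.2.1, d.2.2⟩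
  · symm
    apply Set.eq_univ_of_forall
    intro x
    by_cases hx : Good x
    · left
      obtain ⟨α, u, v, harc, hopen, hmem⟩ := hx
      have : x ∈ ⋃ d, s d := Set.mem_iUnion.mpr ⟨⟨(α, u, v), harc, hopen⟩, hmem⟩
      rw [← hTeq] at this
      obtain ⟨d, hdT, hxd⟩ := Set.mem_iUnion₂.mp this
      exact ⟨d.1.1, ⟨d, hdT, rfl⟩, hxd.1⟩
    · exact Or.inr hx
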